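/- Let r be any real number and let 1 ≤ k ≤ n be integers. Then Σ_{(s_1,…,s_k)} ∏_{i=1}^{k} C(s_i + r − 2, s_i − 1) = C(n + k(r−1) − 1, n − k), where the sum ranges over all k-tuples of positive integers (s_1,…,s_k) with s_1 + ⋯ + s_k = n, and C(t, m) = t(t−1)⋯(t−m+1)/m! denotes the generalized binomial coefficient for real t and nonnegative integer m. -/

import Mathlib

/-- Generalized binomial coefficient `C(t, m) = t(t−1)⋯(t−m+1)/m!` for real `t`
and natural `m`. -/
noncomputable def genChoose (t : ℝ) (m : ℕ) : ℝ :=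
  (∏ i ∈ Finset.range m, (t - i)) / m.factorial

open Finset

lemma descPochhammer_smeval_real (t : ℝ) (m : ℕ) :
    (descPochhammer ℤ m).smeval t = ∏ i ∈ Finset.range m, (t - i) := by
  induction m with
  | zero => simp [descPochhammer_zero, Polynomial.smeval_one]
  | succ m ih =>
    rw [descPochhammer_succ_right, Polynomial.smeval_mul, ih, Finset.prod_range_succ]
    congr 1
    simp [Polynomial.smeval_sub, Polynomial.smeval_X, Polynomial.smeval_natCast]

lemma genChoose_eq_choose (t : ℝ) (m : ℕ) : genChoose t m = Ring.choose t m := by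
  have h := Ring.descPochhammer_eq_factorial_smul_choose t m
  rw [descPochhammer_smeval_real] at h
  have hm : (m.factorial : ℝ) ≠ 0 := by exact_mod_cast m.factorial_ne_zero
  rw [genChoose, h, nsmul_eq_mul]
  field_simp

/-- Upper negation for the generalized binomial coefficient. -/
lemma genChoose_upper_neg (a : ℝ) (j : ℕ) :
    genChoose ((j : ℝ) + a) j = (-1) ^ j * genChoose (-(a + 1)) j := by
  unfold genChoose
  have h1 : ∏ i ∈ Finset.range j, ((j : ℝ) + a - i)
      = ∏ i ∈ Finset.range j, (a + 1 + i) := by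
    rw [← Finset.prod_range_reflect (fun i => (a + 1 + i)) j]
    refine Finset.prod_congr rfl fun i hi => ?_
    have hij : i < j := Finset.mem_range.mp hi
    have : ((j - 1 - i : ℕ) : ℝ) = (j : ℝ) - 1 - i := by
      have h1 : i ≤ j - 1 := Nat.le_sub_one_of_lt hij
      have h2 : 1 ≤ j := Nat.one_le_of_lt (Nat.lt_of_le_of_lt (Nat.zero_le _) hij)
      push_cast [Nat.cast_sub h1, Nat.cast_sub h2]
      ring
    rw [this]; ring
  have h2 : ∏ i ∈ Finset.range j, (-(a + 1) - i)
      = (-1) ^ j * ∏ i ∈ Finset.range j, (a + 1 + i) := by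
    have hc : ∀ i ∈ Finset.range j, (-(a + 1) - (i : ℝ)) = (-1) * (a + 1 + i) :=
      fun i _ => by ring
    rw [Finset.prod_congr rfl hc, Finset.prod_mul_distrib, Finset.prod_const,
      Finset.card_range]
  rw [h1, h2, mul_div_assoc, ← mul_assoc, ← mul_pow]
  norm_num

/-- Decompose a sum over `finAntidiagonal (k+1) m`. -/
lemma sum_finAntidiagonal_succ {M : Type*} [AddCommMonoid M] (k m : ℕ)
    (F : (Fin (k + 1) → ℕ) → M) :
    ∑ f ∈ Finset.finAntidiagonal (k + 1) m, F f
      = ∑ p ∈ Finset.HasAntidiagonal.antidiagonal m, ∑ g ∈ Finset.finAntidiagonal k p.2,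
          F (Fin.cons p.1 g) := by
  rw [Finset.sum_sigma']
  refine (Finset.sum_nbij' (fun f : Fin (k+1) → ℕ => (⟨(f 0, ∑ i : Fin k, f i.succ), Fin.tail f⟩ :
      (Σ p : ℕ × ℕ, Fin k → ℕ))) (fun x => Fin.cons x.1.1 x.2) ?_ ?_ ?_ ?_ ?_)
  · intro f hf
    rw [Finset.mem_finAntidiagonal] at hf
    rw [Finset.mem_sigma, Finset.HasAntidiagonal.mem_antidiagonal, Finset.mem_finAntidiagonal]
    refine ⟨?_, rfl⟩
    rw [← hf, Fin.sum_univ_succ]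
  · intro x hx
    rw [Finset.mem_sigma, Finset.HasAntidiagonal.mem_antidiagonal, Finset.mem_finAntidiagonal] at hx
    rw [Finset.mem_finAntidiagonal, Fin.sum_univ_succ]
    simp only [Fin.cons_zero, Fin.cons_succ]
    rw [hx.2, hx.1]
  · intro f _
    simp [Fin.tail, Fin.cons_self_tail]
  · intro x hx
    rw [Finset.mem_sigma, Finset.HasAntidiagonal.mem_antidiagonal, Finset.mem_finAntidiagonal] at hx
    obtain ⟨⟨p1, p2⟩, g⟩ := x
    simp only [Fin.cons_succ, Fin.cons_zero, Fin.tail_cons]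
    rw [hx.2]
  · intro f _
    simp [Fin.cons_self_tail]

set_option maxHeartbeats 2000000 in
/-- Multivariate Chu–Vandermonde over `finAntidiagonal`. -/
lemma multi_vandermonde : ∀ (k m : ℕ) (x : Fin k → ℝ),
    ∑ t ∈ Finset.finAntidiagonal k m, ∏ i, Ring.choose (x i) (t i)
      = Ring.choose (∑ i, x i) m := by
  intro k
  induction k with
  | zero =>
    intro m x
    match m with
    | 0 =>
      have h : Finset.finAntidiagonal 0 0 = ({0} : Finset (Fin 0 → ℕ)) := by
        ext f
        simp [Finset.mem_finAntidiagonal, Subsingleton.elim f 0]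
      rw [h]
      simp [Ring.choose_zero_right]
    | m + 1 =>
      have h : Finset.finAntidiagonal 0 (m + 1) = (∅ : Finset (Fin 0 → ℕ)) := by
        ext f
        simp [Finset.mem_finAntidiagonal]
      rw [h]
      simp [Ring.choose_zero_succ]
  | succ k ih =>
    intro m x
    rw [sum_finAntidiagonal_succ, Fin.sum_univ_succ,
      Ring.add_choose_eq m (Commute.all _ _)]
    refine Finset.sum_congr rfl fun p _ => ?_
    simp only [Fin.prod_univ_succ, Fin.cons_zero, Fin.cons_succ]
    rw [← Finset.mul_sum, ih]

/-- For any real `r` and integers `1 ≤ k ≤ n`,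
`∑_{(s_1,…,s_k)} ∏_{i=1}^k C(s_i + r − 2, s_i − 1) = C(n + k(r−1) − 1, n − k)`,
the sum over all `k`-tuples of positive integers summing to `n`. -/
theorem vandermonde_convolution_compositions
    (r : ℝ) (n k : ℕ) (hk : 1 ≤ k) (hkn : k ≤ n) :
    (∑ s ∈ Finset.filter
        (fun s : Fin k → ℕ => (∀ j, 0 < s j) ∧ ∑ j, s j = n)
        (Fintype.piFinset fun _ => Finset.Icc 1 n),
      ∏ i, genChoose ((s i : ℝ) + r - 2) (s i - 1))
      = genChoose ((n : ℝ) + k * (r - 1) - 1) (n - k) := by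
  -- Step 1: reindex the sum over compositions of `n` to `finAntidiagonal k (n - k)`.
  have step1 :
      (∑ s ∈ Finset.filter
          (fun s : Fin k → ℕ => (∀ j, 0 < s j) ∧ ∑ j, s j = n)
          (Fintype.piFinset fun _ => Finset.Icc 1 n),
        ∏ i, genChoose ((s i : ℝ) + r - 2) (s i - 1))
      = ∑ t ∈ Finset.finAntidiagonal k (n - k),
          ∏ i, genChoose (((t i : ℕ) : ℝ) + (r - 1)) (t i) := by
    refine Finset.sum_nbij' (fun s i => s i - 1) (fun t i => t i + 1) ?_ ?_ ?_ ?_ ?_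
    · intro s hs
      rw [Finset.mem_filter] at hs
      obtain ⟨-, hpos, hsum⟩ := hs
      rw [Finset.mem_finAntidiagonal]
      refine Nat.eq_sub_of_add_eq ?_
      calc (∑ i, (s i - 1)) + k = ∑ i : Fin k, ((s i - 1) + 1) := by
            rw [Finset.sum_add_distrib]; simp
        _ = n := by
            rw [← hsum]
            refine Finset.sum_congr rfl fun i _ => Nat.succ_pred_eq_of_pos (hpos i)
    · intro t ht
      rw [Finset.mem_finAntidiagonal] at ht
      rw [Finset.mem_filter]
      have hle : ∀ i, t i ≤ n - k := fun i => ht ▸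
        Finset.single_le_sum (fun j _ => Nat.zero_le (t j)) (Finset.mem_univ i)
      refine ⟨?_, fun j => Nat.succ_pos _, ?_⟩
      · rw [Fintype.mem_piFinset]
        intro i
        rw [Finset.mem_Icc]
        refine ⟨Nat.one_le_iff_ne_zero.mpr (Nat.succ_ne_zero _), ?_⟩
        calc t i + 1 ≤ (n - k) + 1 := Nat.add_le_add_right (hle i) 1
          _ ≤ n := by omega
      · rw [Finset.sum_add_distrib]
        simp only [Finset.sum_const, Finset.card_univ, Fintype.card_fin, smul_eq_mul,
          mul_one]
        omega
    · intro s hs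
      rw [Finset.mem_filter] at hs
      funext i
      have := hs.2.1 i
      show s i - 1 + 1 = s i
      omega
    · intro t _
      funext i
      show t i + 1 - 1 = t i
      omega
    · intro s hs
      rw [Finset.mem_filter] at hs
      refine Finset.prod_congr rfl fun i _ => ?_
      have hpos : 1 ≤ s i := hs.2.1 i
      show genChoose ((s i : ℝ) + r - 2) (s i - 1)
          = genChoose (((s i - 1 : ℕ) : ℝ) + (r - 1)) (s i - 1)
      congr 1
      push_cast [Nat.cast_sub hpos]
      ring
  rw [step1]
  -- Step 2: transform each term by upper negation and pull out signs.
  have step2 :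
      (∑ t ∈ Finset.finAntidiagonal k (n - k),
          ∏ i, genChoose (((t i : ℕ) : ℝ) + (r - 1)) (t i))
      = (-1) ^ (n - k) * ∑ t ∈ Finset.finAntidiagonal k (n - k),
          ∏ i, Ring.choose (-r) (t i) := by
    rw [Finset.mul_sum]
    refine Finset.sum_congr rfl fun t ht => ?_
    rw [Finset.mem_finAntidiagonal] at ht
    calc ∏ i, genChoose (((t i : ℕ) : ℝ) + (r - 1)) (t i)
        = ∏ i, ((-1) ^ (t i) * Ring.choose (-r) (t i)) := by
          refine Finset.prod_congr rfl fun i _ => ?_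
          rw [genChoose_upper_neg, genChoose_eq_choose]
          norm_num
      _ = ((-1 : ℝ)) ^ (∑ i, t i) * ∏ i, Ring.choose (-r) (t i) := by
          rw [Finset.prod_mul_distrib, Finset.prod_pow_eq_pow_sum]
      _ = (-1) ^ (n - k) * ∏ i, Ring.choose (-r) (t i) := by rw [ht]
  rw [step2, multi_vandermonde]
  -- Step 3: identify the right-hand side.
  have hnk : ((n - k : ℕ) : ℝ) = (n : ℝ) - k := by push_cast [Nat.cast_sub hkn]; ring
  have hrhs : (n : ℝ) + k * (r - 1) - 1 = ((n - k : ℕ) : ℝ) + ((k : ℝ) * r - 1) := by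
    rw [hnk]; ring
  rw [hrhs, genChoose_upper_neg, genChoose_eq_choose]
  have hsum : (∑ _i : Fin k, (-r)) = -((k : ℝ) * r) := by
    simp [mul_comm]
  rw [hsum]
  congr 2
  ring
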